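/- Let R be a commutative ring, A, H ∈ R^{n×n}, and let d_j ∈ R denote the coefficient of X^j in det(I_n + X·A) ∈ R[X], with d_0 = 1. Then for every k ≥ 1, the coefficient of ε¹·X^k in det(I_n + X·(A + ε·H)) ∈ R[ε][X] equals trace((d_{k−1}·I_n − d_{k−2}·A + d_{k−3}·A² − ⋯ + (−1)^{k−1}·A^{k−1})·H); equivalently, the gradient of the polynomial function A ↦ d_k(A) at A is Σ_{i=0}^{k−1} (−1)^i d_{k−1−i} A^i. -/

import Mathlib

open Matrix Polynomial

/-- `d j A` is the coefficient of `X^j` in `det(I + X·A)`. -/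
noncomputable def dCoeff {R : Type*} [CommRing R] {n : ℕ}
    (A : Matrix (Fin n) (Fin n) R) (j : ℕ) : R :=
  (((1 : Matrix (Fin n) (Fin n) R[X]) + (X : R[X]) • A.map C).det).coeff j

/-- cancellation by polynomial with constant coefficient 1 -/
lemma mul_eq_zero_of_coeff_zero_one {S : Type*} [CommRing S] {p q : S[X]}
    (hp : p.coeff 0 = 1) (h : p * q = 0) : q = 0 := by
  ext m
  induction m using Nat.strong_induction_on with
  | _ m ih =>
    have := congrArg (fun r => r.coeff m) h
    simp only [coeff_mul, coeff_zero] at this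
    rw [Finset.sum_eq_single (0, m)] at this
    · simpa [hp] using this
    · rintro ⟨a, b⟩ hab hne
      simp only [Finset.HasAntidiagonal.mem_antidiagonal] at hab
      have hb : b < m := by
        rcases Nat.lt_or_ge b m with h' | h'
        · exact h'
        · exfalso; apply hne
          have : b = m := le_antisymm (by omega) h'
          simp [this] at hab ⊢; omega
      rw [ih b hb]; simp
    · intro hmem
      simp at hmem

section Aux
variable {R : Type*} [CommRing R] {n : ℕ} (A : Matrix (Fin n) (Fin n) R)

lemma detB_eq : ((1 : Matrix (Fin n) (Fin n) R[X]) + (X : R[X]) • A.map C).det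
    = charpolyRev (-A) := by
  rw [charpolyRev]
  congr 1
  ext i j
  simp [sub_eq_add_neg]

lemma dCoeff_of_lt {j : ℕ} (hj : n < j) : dCoeff A j = 0 := by
  nontriviality R
  rw [dCoeff, detB_eq, ← reverse_charpoly, coeff_reverse]
  have hd : (-A).charpoly.natDegree = n := by
    simpa using charpoly_natDegree_eq_dim (-A)
  rw [hd, revAt_eq_self_of_lt (by omega)]
  exact coeff_eq_zero_of_natDegree_lt (by omega)

lemma dCoeff_le {j : ℕ} (hj : j ≤ n) [Nontrivial R] :
    dCoeff A j = (-A).charpoly.coeff (n - j) := by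
  rw [dCoeff, detB_eq, ← reverse_charpoly, coeff_reverse]
  have hd : (-A).charpoly.natDegree = n := by
    simpa using charpoly_natDegree_eq_dim (-A)
  rw [hd, revAt_le hj]

noncomputable def cMat (m : ℕ) : Matrix (Fin n) (Fin n) R :=
  ∑ i ∈ Finset.range (m + 1), ((-1 : R) ^ i * dCoeff A (m - i)) • A ^ i

lemma dCoeff_zero : dCoeff A 0 = 1 := by
  rw [dCoeff, detB_eq]
  have := eval_charpolyRev (M := -A)
  rwa [← coeff_zero_eq_eval_zero] at this

lemma cMat_zero : cMat A 0 = 1 := by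
  simp [cMat, dCoeff_zero A]

lemma cMat_succ (m : ℕ) : cMat A (m + 1) = dCoeff A (m + 1) • 1 - A * cMat A m := by
  rw [cMat, Finset.sum_range_succ', cMat, Finset.mul_sum]
  have h1 : ∀ i, ((-1 : R) ^ (i + 1) * dCoeff A (m + 1 - (i + 1))) • A ^ (i + 1)
      = -(A * (((-1 : R) ^ i * dCoeff A (m - i)) • A ^ i)) := by
    intro i
    have hmi : m + 1 - (i + 1) = m - i := by omega
    rw [hmi, Matrix.mul_smul, ← pow_succ', ← neg_smul]
    congr 1
    ring
  simp only [h1, Finset.sum_neg_distrib, pow_zero, Nat.sub_zero, one_mul]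
  abel

lemma cMat_card : cMat A n = 0 := by
  nontriviality R
  have hCH := aeval_self_charpoly (-A)
  rw [aeval_eq_sum_range] at hCH
  have hd : (-A).charpoly.natDegree = n := by
    simpa using charpoly_natDegree_eq_dim (-A)
  rw [hd] at hCH
  rw [cMat]
  rw [← hCH]
  apply Finset.sum_congr rfl
  intro i hi
  rw [Finset.mem_range] at hi
  rw [dCoeff_le A (by omega), Nat.sub_sub_self (by omega)]
  have hpow : (-A) ^ i = ((-1 : R) ^ i) • A ^ i := by
    rw [← neg_one_smul R A, _root_.smul_pow]
  rw [hpow, smul_smul]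
  congr 1
  ring

lemma cMat_of_le {m : ℕ} (hm : n ≤ m) : cMat A m = 0 := by
  induction m with
  | zero =>
    have : n = 0 := by omega
    subst this; exact cMat_card A
  | succ m ih =>
    rcases Nat.lt_or_ge n (m+1) with h | h
    · rw [cMat_succ, ih (by omega), mul_zero, sub_zero, dCoeff_of_lt A (by omega), zero_smul]
    · have : n = m + 1 := by omega
      subst this; exact cMat_card A

end Aux

section C1
variable {S : Type*} [CommRing S] {n : ℕ}

lemma det_updateRow_sum'' (M : Matrix (Fin n) (Fin n) S) (i : Fin n)
    {ι : Type*} (s : Finset ι) (f : ι → Fin n → S) :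
    (M.updateRow i (∑ j ∈ s, f j)).det = ∑ j ∈ s, (M.updateRow i (f j)).det := by
  induction s using Finset.cons_induction with
  | empty =>
    simp only [Finset.sum_empty]
    exact det_eq_zero_of_row_eq_zero i (by simp)
  | cons a s ha ih => simp [Finset.sum_cons, det_updateRow_add, ih]

lemma trace_adjugate_mul (M N : Matrix (Fin n) (Fin n) S) :
    trace (adjugate M * N) = ∑ i, (M.updateRow i (N i)).det := by
  have : ∀ i, N i = ∑ j, N i j • (Pi.single j 1 : Fin n → S) := by
    intro i
    funext x
    simp [Pi.single_apply]
  calc trace (adjugate M * N) = ∑ j, ∑ i, (M.updateRow i ((Pi.single j 1 : Fin n → S))).det * N i j := by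
        simp [trace, mul_apply, adjugate_apply]
    _ = ∑ i, ∑ j, (M.updateRow i (N i j • (Pi.single j 1 : Fin n → S))).det := by
        rw [Finset.sum_comm]
        simp [det_updateRow_smul, mul_comm]
    _ = ∑ i, (M.updateRow i (N i)).det := by
        refine Finset.sum_congr rfl fun i _ => ?_
        conv_rhs => rw [this i]
        rw [det_updateRow_sum'']

end C1

section E
variable {S S' : Type*} [CommRing S] [CommRing S'] {n : ℕ}

lemma det_map_add_smul_map (f : S →+* S') (u : S') (M N : Matrix (Fin n) (Fin n) S) :
    (M.map f + u • N.map f).det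
      = ∑ s : Finset (Fin n), u ^ s.card * f ((Matrix.of (s.piecewise N M)).det) := by
  classical
  set Mf : Fin n → Fin n → S' := fun i => f ∘ M i with hMf
  set Nf : Fin n → Fin n → S' := fun i => f ∘ N i with hNf
  have h1 : (M.map f + u • N.map f).det
      = (Matrix.detRowAlternating :
          (Fin n → S') [⋀^Fin n]→ₗ[S'] S').toMultilinearMap ((fun i => u • Nf i) + Mf) := by
    have h0 : (M.map f + u • N.map f : Matrix (Fin n) (Fin n) S')
        = Matrix.of ((fun i => u • Nf i) + Mf) := by
      ext i j
      simp [Mf, Nf, Matrix.map_apply, add_comm]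
    rw [h0]
    rfl
  rw [h1, MultilinearMap.map_add_univ]
  refine Finset.sum_congr rfl fun s _ => ?_
  have h2 : (s.piecewise (fun i => u • Nf i) Mf)
      = s.piecewise (fun i => u • (s.piecewise Nf Mf) i) (s.piecewise Nf Mf) := by
    funext i
    by_cases hi : i ∈ s <;> simp [Finset.piecewise, hi]
  rw [h2, MultilinearMap.map_piecewise_smul]
  rw [Finset.prod_const, smul_eq_mul]
  congr 1
  have h3 : (s.piecewise Nf Mf) = fun i j => ((Matrix.of (s.piecewise N M)).map f : Matrix (Fin n) (Fin n) S') i j := by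
    funext i j
    by_cases hi : i ∈ s <;> simp [Finset.piecewise, hi, Mf, Nf]
  rw [h3, RingHom.map_det]
  rfl

end E

section Adj
variable {R : Type*} [CommRing R] {n : ℕ} (A : Matrix (Fin n) (Fin n) R)

lemma detB_coeff_zero : (((1 : Matrix (Fin n) (Fin n) R[X]) + (X : R[X]) • A.map C).det).coeff 0 = 1 := by
  rw [detB_eq, coeff_zero_eq_eval_zero, eval_charpolyRev]

lemma hdetB {D : ℕ} (hD : n < D) :
    ((1 : Matrix (Fin n) (Fin n) R[X]) + (X : R[X]) • A.map C).det
      = ∑ m ∈ Finset.range D, C (dCoeff A m) * X ^ m := by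
  ext j
  rw [finset_sum_coeff]
  simp only [coeff_C_mul, coeff_X_pow, mul_ite, mul_one, mul_zero]
  rw [Finset.sum_ite_eq (Finset.range D) j (fun m => dCoeff A m)]
  by_cases hj : j ∈ Finset.range D
  · rw [if_pos hj]; rfl
  · rw [if_neg hj]
    rw [Finset.mem_range, not_lt] at hj
    exact dCoeff_of_lt A (by omega)

lemma BQ_eq {D : ℕ} (hD : n < D) :
    ((1 : Matrix (Fin n) (Fin n) R[X]) + (X : R[X]) • A.map C)
        * (∑ m ∈ Finset.range D, (X ^ m : R[X]) • (cMat A m).map C)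
      = (((1 : Matrix (Fin n) (Fin n) R[X]) + (X : R[X]) • A.map C).det) • 1 := by
  set G : ℕ → Matrix (Fin n) (Fin n) R[X] :=
    fun t => (X ^ t : R[X]) • ((dCoeff A t • (1 : Matrix (Fin n) (Fin n) R) - cMat A t).map C) with hG
  have hG0 : G 0 = 0 := by
    ext i j
    simp [hG, cMat_zero A, dCoeff_zero A]
  have hGD : G D = 0 := by
    ext i j
    simp [hG, cMat_of_le A (le_of_lt hD), dCoeff_of_lt A hD]
  have step2 : ∀ m, ((X : R[X]) • A.map C) * ((X ^ m : R[X]) • (cMat A m).map C) = G (m + 1) := by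
    intro m
    rw [Matrix.smul_mul, Matrix.mul_smul, smul_smul, ← Matrix.map_mul]
    rw [hG]
    have : A * cMat A m = dCoeff A (m + 1) • 1 - cMat A (m + 1) := by
      rw [cMat_succ]; abel
    rw [this, ← pow_succ']
  rw [add_mul, one_mul, Finset.mul_sum]
  simp only [step2]
  have hre : ∑ m ∈ Finset.range D, G (m + 1) = ∑ m ∈ Finset.range D, G m := by
    have h2 := Finset.sum_range_succ G D
    rw [Finset.sum_range_succ' G D, hG0, hGD, add_zero, add_zero] at h2
    exact h2
  rw [hre, ← Finset.sum_add_distrib]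
  have hterm : ∀ m, (X ^ m : R[X]) • (cMat A m).map C + G m
      = (C (dCoeff A m) * X ^ m) • (1 : Matrix (Fin n) (Fin n) R[X]) := by
    intro m
    rw [hG, ← smul_add]
    have : (cMat A m).map C + (dCoeff A m • (1 : Matrix (Fin n) (Fin n) R) - cMat A m).map C
        = (dCoeff A m • (1 : Matrix (Fin n) (Fin n) R)).map C := by
      ext i j
      simp [Matrix.map_apply]
    rw [this]
    ext i j
    rcases eq_or_ne i j with h | h
    · subst h
      simp [Matrix.map_apply]
    · simp [Matrix.map_apply, Matrix.one_apply_ne h]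
  simp only [hterm]
  rw [← Finset.sum_smul, ← hdetB A hD]

lemma adjugate_B {D : ℕ} (hD : n < D) :
    adjugate ((1 : Matrix (Fin n) (Fin n) R[X]) + (X : R[X]) • A.map C)
      = ∑ m ∈ Finset.range D, (X ^ m : R[X]) • (cMat A m).map C := by
  set B := (1 : Matrix (Fin n) (Fin n) R[X]) + (X : R[X]) • A.map C with hB
  set Q := ∑ m ∈ Finset.range D, (X ^ m : R[X]) • (cMat A m).map C with hQ
  have h1 : B * (adjugate B - Q) = 0 := by
    rw [Matrix.mul_sub, mul_adjugate, hQ, BQ_eq A hD, sub_self]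
  have h2 : B.det • (adjugate B - Q) = 0 := by
    have h := congrArg (fun M => adjugate B * M) h1
    simp only [Matrix.mul_zero] at h
    rwa [← Matrix.mul_assoc, adjugate_mul, Matrix.smul_mul, Matrix.one_mul] at h
  have h3 : adjugate B - Q = 0 := by
    apply Matrix.ext
    intro i j
    rw [Matrix.zero_apply]
    have h := congrArg (fun M => M i j) h2
    simp only [Matrix.smul_apply, Matrix.zero_apply, smul_eq_mul] at h
    exact mul_eq_zero_of_coeff_zero_one (detB_coeff_zero A) h
  rw [← sub_eq_zero]
  exact h3

end Adj

lemma coeff_one_X_pow_mul_C {R : Type*} [CommRing R] (c : ℕ) (r : R) :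
    ((X ^ c * C r : R[X])).coeff 1 = if c = 1 then r else 0 := by
  rw [mul_comm, coeff_mul_X_pow']
  rcases c with _ | _ | c <;> simp

/-- The gradient of `A ↦ d_k(A)` is `Σ_{i=0}^{k-1} (-1)^i d_{k-1-i} A^i`:
the coefficient of `ε·X^k` in `det(I + X·(A + ε·H))` equals
`trace((d_{k-1}·I − d_{k-2}·A + ⋯ + (−1)^{k−1}·A^{k−1})·H)`. -/
theorem stmt11 {R : Type*} [CommRing R] {n : ℕ} (k : ℕ) (hk : 1 ≤ k)
    (A H : Matrix (Fin n) (Fin n) R) :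
    ((((1 : Matrix (Fin n) (Fin n) (Polynomial (Polynomial R))) +
        (X : Polynomial (Polynomial R)) •
          (A.map (fun a => C (C a)) +
            (C (X : Polynomial R)) • H.map (fun a => C (C a)))).det).coeff k).coeff 1 =
      ((∑ i ∈ Finset.range k, ((-1 : R) ^ i * dCoeff A (k - 1 - i)) • A ^ i) * H).trace := by
  classical
  set ι : Polynomial R →+* Polynomial (Polynomial R) :=
    mapRingHom (C : R →+* Polynomial R) with hι
  set M₀ : Matrix (Fin n) (Fin n) (Polynomial R) := 1 + (X : Polynomial R) • A.map C with hM₀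
  set N₀ : Matrix (Fin n) (Fin n) (Polynomial R) := (X : Polynomial R) • H.map C with hN₀
  have hmat : (1 : Matrix (Fin n) (Fin n) (Polynomial (Polynomial R))) +
        (X : Polynomial (Polynomial R)) •
          (A.map (fun a => C (C a)) + (C (X : Polynomial R)) • H.map (fun a => C (C a)))
      = M₀.map ι + (C (X : Polynomial R)) • N₀.map ι := by
    apply Matrix.ext
    intro i j
    simp only [hM₀, hN₀, hι, Matrix.add_apply, Matrix.smul_apply, Matrix.map_apply,
      Matrix.one_apply, smul_eq_mul, coe_mapRingHom, Polynomial.map_add, Polynomial.map_mul,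
      Polynomial.map_one, Polynomial.map_zero, map_C, map_X,
      apply_ite (Polynomial.map (C : R →+* Polynomial R))]
    ring
  rw [hmat, det_map_add_smul_map ι (C X) M₀ N₀, finset_sum_coeff, finset_sum_coeff]
  have hterm : ∀ s : Finset (Fin n),
      ((((C (X : Polynomial R)) ^ s.card * ι ((Matrix.of (s.piecewise N₀ M₀)).det)).coeff k).coeff 1)
      = if s.card = 1 then ((Matrix.of (s.piecewise N₀ M₀)).det).coeff k else 0 := by
    intro s
    rw [← map_pow, coeff_C_mul, hι, coe_mapRingHom, coeff_map, coeff_one_X_pow_mul_C]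
  simp only [hterm]
  rw [← Finset.sum_filter]
  have himg : (Finset.univ.filter (fun s : Finset (Fin n) => s.card = 1))
      = Finset.univ.image (fun j : Fin n => ({j} : Finset (Fin n))) := by
    ext s
    simp [Finset.card_eq_one, eq_comm]
  rw [himg, Finset.sum_image (by intro a _ b _ h; exact Finset.singleton_injective h)]
  have hsing : ∀ j : Fin n,
      Matrix.of (({j} : Finset (Fin n)).piecewise N₀ M₀) = M₀.updateRow j (N₀ j) := by
    intro j
    apply Matrix.ext
    intro i l
    by_cases h : i = j <;>
      simp [Finset.piecewise, h, Matrix.updateRow_apply]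
  simp only [hsing]
  rw [← finset_sum_coeff, ← trace_adjugate_mul M₀ N₀]
  obtain ⟨k', rfl⟩ : ∃ k', k = k' + 1 := ⟨k - 1, by omega⟩
  have hNsp : adjugate M₀ * N₀ = (X : Polynomial R) • (adjugate M₀ * H.map C) := by
    rw [hN₀, Matrix.mul_smul]
  rw [hNsp, trace_smul, smul_eq_mul, coeff_X_mul]
  rw [hM₀, adjugate_B A (D := n + (k' + 1)) (by omega), Finset.sum_mul, trace_sum]
  have hterm2 : ∀ m, trace ((X ^ m : Polynomial R) • (cMat A m).map C * H.map C)
      = (X : Polynomial R) ^ m * C (trace (cMat A m * H)) := by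
    intro m
    rw [Matrix.smul_mul, trace_smul, smul_eq_mul, ← Matrix.map_mul]
    congr 1
    simp [Matrix.trace, Matrix.map_apply, Matrix.diag]
  simp only [hterm2]
  rw [finset_sum_coeff]
  have hco : ∀ m ∈ Finset.range (n + (k' + 1)),
      ((X : Polynomial R) ^ m * C (trace (cMat A m * H))).coeff k'
      = if k' = m then trace (cMat A m * H) else 0 := by
    intro m _
    rw [mul_comm, coeff_C_mul, coeff_X_pow]
    simp
  rw [Finset.sum_congr rfl hco, Finset.sum_ite_eq (Finset.range (n + (k' + 1))) k'
    (fun m => trace (cMat A m * H)), if_pos (Finset.mem_range.mpr (by omega))]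
  rw [cMat]
  simp only [Nat.add_sub_cancel]
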